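/- Let ω ∈ ℝ^d with positive components, Λ_ω = {k ∈ ℤ^d : k·ω = 0}, and let ν₁,…,ν_{d_ω} ∈ ℤ^d be a basis of the orthogonal complement Λ_ω^⊥ in ℝ^d. Write ω = Σ_n v_n ν_n with v = (v₁,…,v_{d_ω}) ∈ ℝ^{d_ω}. Then for every k ∈ ℤ^{d_ω} \ {0}, one has k · v ≠ 0. -/

import Mathlib

open Finset

/-- Let `ω ∈ ℝ^d` have positive components, `Λ_ω = {k ∈ ℤ^d : k·ω = 0}`, and let
`ν₁, …, ν_{d_ω} ∈ ℤ^d` be a basis of the orthogonal complement `Λ_ω^⊥` in `ℝ^d`.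
If `ω = Σ_n v_n ν_n`, then `k · v ≠ 0` for every nonzero `k ∈ ℤ^{d_ω}`. -/
theorem stmt_1 (d m : ℕ) (ω : EuclideanSpace ℝ (Fin d)) (hω : ∀ j, 0 < ω j)
    (ν : Fin m → Fin d → ℤ)
    (hindep : LinearIndependent ℝ
      (fun n => (WithLp.toLp 2 (fun j => (ν n j : ℝ)) : EuclideanSpace ℝ (Fin d))))
    (hspan : Submodule.span ℝ
        (Set.range fun n => (WithLp.toLp 2 (fun j => (ν n j : ℝ)) : EuclideanSpace ℝ (Fin d)))
      = (Submodule.span ℝ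
          {x : EuclideanSpace ℝ (Fin d) |
            ∃ k : Fin d → ℤ, (∀ j, x j = (k j : ℝ)) ∧ ∑ j, (k j : ℝ) * ω j = 0})ᗮ)
    (v : Fin m → ℝ)
    (hv : ω = ∑ n, v n • (WithLp.toLp 2 (fun j => (ν n j : ℝ)) : EuclideanSpace ℝ (Fin d)))
    (k : Fin m → ℤ) (hk : k ≠ 0) :
    ∑ n, (k n : ℝ) * v n ≠ 0 := by
  intro hkv
  classical
  set νr : Fin m → EuclideanSpace ℝ (Fin d) :=
    fun n => (WithLp.toLp 2 (fun j => (ν n j : ℝ)) : EuclideanSpace ℝ (Fin d)) with hνr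
  -- Gram matrix over ℤ
  set G : Matrix (Fin m) (Fin m) ℤ := Matrix.of (fun n l => ∑ j, ν n j * ν l j) with hG
  set GR : Matrix (Fin m) (Fin m) ℝ := G.map (Int.cast : ℤ → ℝ) with hGR
  -- GR has nonzero determinant
  have hdetR : GR.det ≠ 0 := by
    intro h0
    obtain ⟨y, hy0, hy⟩ := Matrix.exists_mulVec_eq_zero_iff.mpr h0
    set u : Fin d → ℝ := fun j => ∑ l, y l * (ν l j : ℝ) with hu
    have hnu : ∀ n, ∑ j, (ν n j : ℝ) * u j = 0 := by
      intro n
      have := congrFun hy n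
      simp only [Matrix.mulVec, dotProduct, Pi.zero_apply, hGR, Matrix.map_apply,
        hG, Matrix.of_apply] at this
      rw [← this]
      simp only [hu]
      push_cast
      simp only [Finset.mul_sum, Finset.sum_mul]
      rw [Finset.sum_comm]
      refine Finset.sum_congr rfl fun _ _ => Finset.sum_congr rfl fun _ _ => by ring
    have huu : ∑ j, u j * u j = 0 := by
      calc ∑ j, u j * u j = ∑ j, (∑ l, y l * (ν l j : ℝ)) * u j := rfl
        _ = ∑ l, y l * ∑ j, (ν l j : ℝ) * u j := by
            simp only [Finset.mul_sum, Finset.sum_mul]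
            rw [Finset.sum_comm]
            refine Finset.sum_congr rfl fun _ _ => Finset.sum_congr rfl fun _ _ => by ring
        _ = 0 := by simp [hnu]
    have hu0 : ∀ j, u j = 0 := by
      intro j
      have := (Finset.sum_eq_zero_iff_of_nonneg (fun i _ => mul_self_nonneg (u i))).mp huu
      have := this j (Finset.mem_univ j)
      nlinarith [this]
    have : ∀ n, y n = 0 := by
      have hsum : ∑ n, y n • νr n = 0 := by
        ext j
        have : (∑ n, y n • νr n) j = ∑ n, y n * (ν n j : ℝ) := by
          rw [WithLp.ofLp_sum, Finset.sum_apply]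
          exact Finset.sum_congr rfl fun n _ => rfl
        show (∑ n, y n • νr n) j = 0
        rw [this]
        simpa [hu] using hu0 j
      exact Fintype.linearIndependent_iff.mp hindep y hsum
    exact hy0 (funext this)
  have hdetRZ : GR.det = ((G.det : ℤ) : ℝ) :=
    (RingHom.map_det (Int.castRingHom ℝ) G).symm
  have hdetZ : G.det ≠ 0 := by
    intro h
    apply hdetR
    rw [hdetRZ, h, Int.cast_zero]
  -- invert over ℚ
  set GQ : Matrix (Fin m) (Fin m) ℚ := G.map (Int.cast : ℤ → ℚ) with hGQ
  have hdetQ : IsUnit GQ.det := by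
    rw [isUnit_iff_ne_zero]
    have : GQ.det = ((G.det : ℤ) : ℚ) := (RingHom.map_det (Int.castRingHom ℚ) G).symm
    rw [this]
    simpa using hdetZ
  set c : Fin m → ℚ := GQ⁻¹.mulVec (fun n => (k n : ℚ)) with hc
  have hGc : GQ.mulVec c = fun n => (k n : ℚ) := by
    rw [hc, Matrix.mulVec_mulVec, Matrix.mul_nonsing_inv _ hdetQ, Matrix.one_mulVec]
  -- GR *ᵥ (c cast) = k cast
  have hGcR : ∀ n, ∑ l, (G n l : ℝ) * (c l : ℝ) = (k n : ℝ) := by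
    intro n
    have := congrFun hGc n
    simp only [Matrix.mulVec, dotProduct, hGQ, Matrix.map_apply] at this
    have : ((∑ l, (G n l : ℚ) * c l : ℚ) : ℝ) = ((k n : ℚ) : ℝ) := by rw [this]
    push_cast at this
    convert this using 2
  -- components of ω
  have hωj : ∀ j, ω j = ∑ l, v l * (ν l j : ℝ) := by
    intro j
    rw [hv]
    simp [νr]
  -- x := Σ c_n ν_n
  set x : EuclideanSpace ℝ (Fin d) := WithLp.toLp 2 (fun j => ∑ n, (c n : ℝ) * (ν n j : ℝ)) with hx
  -- x ⬝ ω = Σ c_n w_n = Σ_l v_l * k_l = 0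
  have hxω : ∑ j, x j * ω j = 0 := by
    have step1 : ∑ j, x j * ω j = ∑ n, (c n : ℝ) * ∑ j, (ν n j : ℝ) * ω j := by
      simp only [hx]
      simp only [Finset.mul_sum, Finset.sum_mul]
      rw [Finset.sum_comm]
      refine Finset.sum_congr rfl fun _ _ => Finset.sum_congr rfl fun _ _ => by ring
    have step2 : ∀ n, ∑ j, (ν n j : ℝ) * ω j = ∑ l, v l * (G n l : ℝ) := by
      intro n
      simp only [hωj, hG, Matrix.of_apply]
      push_cast
      simp only [Finset.mul_sum, Finset.sum_mul]
      rw [Finset.sum_comm]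
      refine Finset.sum_congr rfl fun _ _ => Finset.sum_congr rfl fun _ _ => by ring
    have step3 : ∑ n, (c n : ℝ) * ∑ l, v l * (G n l : ℝ)
        = ∑ l, v l * ∑ n, (G n l : ℝ) * (c n : ℝ) := by
      simp only [Finset.mul_sum, Finset.sum_mul]
      rw [Finset.sum_comm]
      refine Finset.sum_congr rfl fun _ _ => Finset.sum_congr rfl fun _ _ => by ring
    rw [step1]
    rw [Finset.sum_congr rfl fun n _ => by rw [step2 n]]
    rw [step3]
    have hsymm : ∀ n l, G n l = G l n := by
      intro n l; simp only [hG, Matrix.of_apply, mul_comm]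
    calc ∑ l, v l * ∑ n, (G n l : ℝ) * (c n : ℝ)
        = ∑ l, v l * (k l : ℝ) := by
          congr 1; ext l; congr 1
          rw [← hGcR l]
          congr 1; ext n; rw [hsymm n l]
      _ = 0 := by rw [← hkv]; congr 1; ext l; ring
  -- x ∈ span ν = (span S)ᗮ
  have hxmem : x ∈ (Submodule.span ℝ
      {z : EuclideanSpace ℝ (Fin d) |
        ∃ kk : Fin d → ℤ, (∀ j, z j = (kk j : ℝ)) ∧ ∑ j, (kk j : ℝ) * ω j = 0})ᗮ := by
    rw [← hspan]
    have : x = ∑ n, (c n : ℝ) • νr n := by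
      ext j
      have h1 : (∑ n, ((c n : ℝ)) • νr n) j = ∑ n, (c n : ℝ) * (ν n j : ℝ) := by
        rw [WithLp.ofLp_sum, Finset.sum_apply]
        exact Finset.sum_congr rfl fun n _ => rfl
      show x j = (∑ n, ((c n : ℝ)) • νr n) j
      rw [h1]
    rw [this]
    exact Submodule.sum_mem _ fun n _ =>
      Submodule.smul_mem _ _ (Submodule.subset_span ⟨n, rfl⟩)
  -- clear denominators
  set N : ℕ := ∏ n, (c n).den with hN
  have hNpos : 0 < N := Finset.prod_pos fun n _ => (c n).pos
  have hz : ∀ n, ∃ z : ℤ, (z : ℚ) = (N : ℚ) * c n := by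
    intro n
    have hdvd : (c n).den ∣ N := Finset.dvd_prod_of_mem _ (Finset.mem_univ n)
    obtain ⟨t, ht⟩ := hdvd
    refine ⟨t * (c n).num, ?_⟩
    have hden : ((c n).den : ℚ) ≠ 0 := Nat.cast_ne_zero.mpr (c n).den_nz
    have key : c n * ((c n).den : ℚ) = ((c n).num : ℚ) := by
      nth_rewrite 1 [← Rat.num_div_den (c n)]
      rw [div_mul_cancel₀ _ hden]
    rw [ht]
    push_cast
    rw [mul_comm ((c n).den : ℚ) (t : ℚ), mul_assoc, mul_comm ((c n).den : ℚ) (c n),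
      key]
  choose z hzc using hz
  set K : Fin d → ℤ := fun j => ∑ n, z n * ν n j with hK
  have hKx : ∀ j, (K j : ℝ) = (N : ℝ) * x j := by
    intro j
    have : ∀ n, ((z n : ℝ)) = (N : ℝ) * (c n : ℝ) := by
      intro n
      exact_mod_cast congrArg (fun q : ℚ => (q : ℝ)) (hzc n)
    simp only [hK, hx]
    push_cast
    rw [Finset.mul_sum]
    congr 1; ext n
    rw [this n]; ring
  set y : EuclideanSpace ℝ (Fin d) := WithLp.toLp 2 (fun j => (K j : ℝ)) with hy
  have hymem : y ∈ Submodule.span ℝ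
      {z : EuclideanSpace ℝ (Fin d) |
        ∃ kk : Fin d → ℤ, (∀ j, z j = (kk j : ℝ)) ∧ ∑ j, (kk j : ℝ) * ω j = 0} := by
    apply Submodule.subset_span
    refine ⟨K, fun j => rfl, ?_⟩
    have : ∑ j, (K j : ℝ) * ω j = (N : ℝ) * ∑ j, x j * ω j := by
      rw [Finset.mul_sum]
      congr 1; ext j
      rw [hKx j]; ring
    rw [this, hxω, mul_zero]
  have hinner : (inner ℝ y x : ℝ) = 0 :=
    (Submodule.mem_orthogonal _ x).mp hxmem y hymem
  have hxx : ∑ j, x j * x j = 0 := by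
    have h1 : (inner ℝ y x : ℝ) = ∑ j, y j * x j := by
      simp [PiLp.inner_apply, RCLike.inner_apply, conj_trivial, mul_comm]
    have h2 : ∑ j, y j * x j = (N : ℝ) * ∑ j, x j * x j := by
      rw [Finset.mul_sum]
      congr 1; ext j
      rw [hy]
      show (K j : ℝ) * x j = _
      rw [hKx j]; ring
    have hNne : (N : ℝ) ≠ 0 := Nat.cast_ne_zero.mpr hNpos.ne'
    have := hinner
    rw [h1, h2] at this
    exact (mul_eq_zero.mp this).resolve_left hNne
  have hx0 : ∀ j, x j = 0 := by
    intro j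
    have := (Finset.sum_eq_zero_iff_of_nonneg (fun i _ => mul_self_nonneg (x i))).mp hxx
    have := this j (Finset.mem_univ j)
    nlinarith [this]
  -- c = 0 by independence
  have hc0 : ∀ n, c n = 0 := by
    have hsum : ∑ n, ((c n : ℝ)) • νr n = 0 := by
      ext j
      have : (∑ n, ((c n : ℝ)) • νr n) j = ∑ n, (c n : ℝ) * (ν n j : ℝ) := by
        rw [WithLp.ofLp_sum, Finset.sum_apply]
        exact Finset.sum_congr rfl fun n _ => rfl
      show (∑ n, ((c n : ℝ)) • νr n) j = 0
      rw [this]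
      simpa [hx] using hx0 j
    have h7 := Fintype.linearIndependent_iff.mp hindep (fun n => (c n : ℝ)) hsum
    intro n
    have h8 : ((c n : ℝ)) = 0 := h7 n
    exact_mod_cast h8
  -- hence k = 0
  apply hk
  funext n
  have h9 := congrFun hGc n
  simp only [Matrix.mulVec, dotProduct] at h9
  have h10 : ((k n : ℚ)) = 0 := by
    rw [← h9]
    exact Finset.sum_eq_zero fun l _ => by rw [hc0 l, mul_zero]
  exact_mod_cast h10
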